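/- The MIP restriction restricts the feasible region: every assignment (v, y, q, w, ζ) feasible for the MIP restriction (Equation (10)) projects onto an assignment (v, y, q) feasible for the PQ-formulation constraints (1c)–(1j), provided q_{il} is derived as q_{il} = ∑_j v_{ilj} / ∑_{i'} ∑_j v_{i'lj} whenever the denominator is positive (and the path constraints v_{ilj} = q_{il} y_{lj} are then satisfied because each auxiliary pool sends flow to a single output). -/

import Mathlib

theorem mip_restriction_gives_pq_feasible {I J T : Type*}
    [Fintype I] [Fintype J] [Fintype T]
    (v : I → J → ℝ) (w : I → T → J → ℝ) (ζ : T → J → ℝ)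
    (γ : T → ℝ) (c : J → ℝ) (q : I → ℝ) (y : J → ℝ)
    (hγ0 : ∀ t : T, 0 ≤ γ t)
    (hγsum : ∑ t : T, γ t = 1)
    (hc : ∀ j : J, 0 ≤ c j)
    (hw0 : ∀ (i : I) (t : T) (j : J), 0 ≤ w i t j)
    (hbal : ∀ (i : I) (j : J), v i j = ∑ t : T, w i t j)
    (hfrac : ∀ (i : I) (t : T), ∑ j : J, w i t j = γ t * ∑ j : J, v i j)
    (hbin : ∀ (t : T) (j : J), ζ t j = 0 ∨ ζ t j = 1)
    (hζsum : ∀ t : T, ∑ j : J, ζ t j = 1)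
    (hwub : ∀ (i : I) (t : T) (j : J), w i t j ≤ c j * ζ t j)
    (hDpos : 0 < ∑ i : I, ∑ j : J, v i j)
    (hq : ∀ i : I, q i = (∑ j : J, v i j) / (∑ i' : I, ∑ j : J, v i' j))
    (hy : ∀ j : J, y j = ∑ i : I, v i j) :
    (∀ i : I, 0 ≤ q i) ∧ (∑ i : I, q i) = 1 ∧
    (∀ (i : I) (j : J), v i j = q i * y j) := by
  classical
  have hwz : ∀ (i : I) (t : T) (j : J), ζ t j = 0 → w i t j = 0 := by
    intro i t j h0
    have h := hwub i t j
    rw [h0, mul_zero] at h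
    exact le_antisymm h (hw0 i t j)
  have hkey : ∀ (i : I) (t : T) (j : J),
      w i t j = ζ t j * (γ t * ∑ j' : J, v i j') := by
    intro i t j
    rcases hbin t j with h0 | h1
    · rw [h0, zero_mul, hwz i t j h0]
    · rw [h1, one_mul]
      have hrest : ∀ j' ∈ Finset.univ.erase j, ζ t j' = 0 := by
        have hsum0 : ∑ j' ∈ Finset.univ.erase j, ζ t j' = 0 := by
          have := Finset.add_sum_erase Finset.univ (ζ t) (Finset.mem_univ j)
          rw [hζsum t, h1] at this
          linarith
        intro j' hj'
        have hnn : ∀ j'' ∈ Finset.univ.erase j, 0 ≤ ζ t j'' := by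
          intro j'' _
          rcases hbin t j'' with h | h <;> rw [h] <;> norm_num
        exact (Finset.sum_eq_zero_iff_of_nonneg hnn).mp hsum0 j' hj'
      have : ∑ j' : J, w i t j' = w i t j := by
        apply Finset.sum_eq_single
        · intro j' _ hj'
          exact hwz i t j' (hrest j' (Finset.mem_erase.mpr ⟨hj', Finset.mem_univ j'⟩))
        · intro h; exact absurd (Finset.mem_univ j) h
      rw [← this, hfrac]
  have hv : ∀ (i : I) (j : J),
      v i j = (∑ t : T, γ t * ζ t j) * ∑ j' : J, v i j' := by
    intro i j
    rw [hbal, Finset.sum_mul]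
    exact Finset.sum_congr rfl fun t _ => by rw [hkey]; ring
  have hV0 : ∀ i : I, 0 ≤ ∑ j : J, v i j := by
    intro i
    apply Finset.sum_nonneg
    intro j _
    rw [hbal]
    exact Finset.sum_nonneg fun t _ => hw0 i t j
  refine ⟨fun i => by rw [hq]; exact div_nonneg (hV0 i) hDpos.le, ?_, ?_⟩
  · have : ∑ i : I, q i = (∑ i : I, ∑ j : J, v i j) / (∑ i' : I, ∑ j : J, v i' j) := by
      rw [Finset.sum_div]
      exact Finset.sum_congr rfl fun i _ => hq i
    rw [this, div_self hDpos.ne']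
  · intro i j
    have hyj : y j = (∑ t : T, γ t * ζ t j) * ∑ i' : I, ∑ j' : J, v i' j' := by
      rw [hy, Finset.mul_sum]
      exact Finset.sum_congr rfl fun i' _ => hv i' j
    rw [hq, hyj, hv]
    field_simp
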